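/- Let N ≥ 1, K ≥ 0, let D_0,…,D_K be N×N real matrices and E_0,…,E_{K−1} be N×N real matrices. Define recursively Q_0 = D_0, and for k = 0,…,K−1, U_k = Q_k^{−1}E_kᵀ and Q_{k+1} = D_{k+1} − E_kU_k, assuming Q_0,…,Q_{K−1} are invertible. Let T be the (K+1)N×(K+1)N block tridiagonal matrix with diagonal blocks T_{k,k} = D_k, subdiagonal blocks T_{k+1,k} = E_k, superdiagonal blocks T_{k,k+1} = E_kᵀ, and all other blocks zero. Let L be the block lower bidiagonal matrix with L_{k,k} = Q_k and L_{k+1,k} = E_k (other blocks zero), and let R be the block upper bidiagonal matrix with R_{k,k} = I and R_{k,k+1} = U_k (other blocks zero). Then T = L·R. -/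

import Mathlib

open Matrix

/-- The Schur-complement recursion `Q₀ = D₀`, `Q_{k+1} = D_{k+1} − E_k (Q_k⁻¹ E_kᵀ)`. -/
noncomputable def Qrec {N : ℕ} (D E : ℕ → Matrix (Fin N) (Fin N) ℝ) :
    ℕ → Matrix (Fin N) (Fin N) ℝ
  | 0 => D 0
  | k + 1 => D (k + 1) - E k * ((Qrec D E k)⁻¹ * (E k)ᵀ)

/-- The `(K+1)N × (K+1)N` block tridiagonal matrix with diagonal blocks `D_k`,
subdiagonal blocks `E_k` and superdiagonal blocks `E_kᵀ`. -/
noncomputable def blockTridiag (K N : ℕ) (D E : ℕ → Matrix (Fin N) (Fin N) ℝ) :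
    Matrix (Fin (K + 1) × Fin N) (Fin (K + 1) × Fin N) ℝ :=
  fun p q =>
    if (p.1 : ℕ) = (q.1 : ℕ) then D (p.1 : ℕ) p.2 q.2
    else if (p.1 : ℕ) = (q.1 : ℕ) + 1 then E (q.1 : ℕ) p.2 q.2
    else if (q.1 : ℕ) = (p.1 : ℕ) + 1 then (E (p.1 : ℕ))ᵀ p.2 q.2
    else 0

/-- The block lower bidiagonal matrix with diagonal blocks `Q_k` and subdiagonal
blocks `E_k`. -/
noncomputable def blockLower (K N : ℕ) (Q E : ℕ → Matrix (Fin N) (Fin N) ℝ) :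
    Matrix (Fin (K + 1) × Fin N) (Fin (K + 1) × Fin N) ℝ :=
  fun p q =>
    if (p.1 : ℕ) = (q.1 : ℕ) then Q (p.1 : ℕ) p.2 q.2
    else if (p.1 : ℕ) = (q.1 : ℕ) + 1 then E (q.1 : ℕ) p.2 q.2
    else 0

/-- The block upper bidiagonal matrix with identity diagonal blocks and superdiagonal
blocks `U_k`. -/
noncomputable def blockUpper (K N : ℕ) (U : ℕ → Matrix (Fin N) (Fin N) ℝ) :
    Matrix (Fin (K + 1) × Fin N) (Fin (K + 1) × Fin N) ℝ :=
  fun p q =>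
    if (p.1 : ℕ) = (q.1 : ℕ) then (1 : Matrix (Fin N) (Fin N) ℝ) p.2 q.2
    else if (q.1 : ℕ) = (p.1 : ℕ) + 1 then U (p.1 : ℕ) p.2 q.2
    else 0

private lemma sum_ite_coe {K : ℕ} {M : Type*} [AddCommMonoid M]
    (i : Fin (K + 1)) (F : Fin (K + 1) → M) :
    (∑ k : Fin (K + 1), if (i : ℕ) = (k : ℕ) then F k else 0) = F i := by
  rw [Finset.sum_eq_single i]
  · simp
  · intro k _ hk
    rw [if_neg (fun hc => hk (Fin.ext hc).symm)]
  · simp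

private lemma sum_ite_shift {K : ℕ} {M : Type*} [AddCommMonoid M]
    (i : Fin (K + 1)) (G : Fin (K + 1) → M) :
    (∑ k : Fin (K + 1), if (i : ℕ) = (k : ℕ) + 1 then G k else 0)
      = if h : 0 < (i : ℕ) then G ⟨(i : ℕ) - 1, by omega⟩ else 0 := by
  split_ifs with h
  · rw [Finset.sum_eq_single (⟨(i : ℕ) - 1, by omega⟩ : Fin (K + 1))]
    · rw [if_pos (by simp; omega)]
    · intro k _ hk
      rw [if_neg]
      intro hc
      exact hk (Fin.ext (by simp; omega))
    · simp
  · apply Finset.sum_eq_zero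
    intro k _
    rw [if_neg (by omega)]

/-- block LU factorization of a block tridiagonal matrix:
`T = L · R` where `L` has blocks `Q_k` (diagonal) and `E_k` (subdiagonal), and `R`
has identity diagonal blocks and superdiagonal blocks `U_k = Q_k⁻¹ E_kᵀ`. -/
theorem block_tridiagonal_LU (N K : ℕ) (hN : 1 ≤ N)
    (D E : ℕ → Matrix (Fin N) (Fin N) ℝ)
    (hQ : ∀ k < K, IsUnit (Qrec D E k)) :
    blockTridiag K N D E =
      blockLower K N (Qrec D E) E *
        blockUpper K N (fun k => (Qrec D E k)⁻¹ * (E k)ᵀ) := by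
  set Q := Qrec D E with hQdef
  set U : ℕ → Matrix (Fin N) (Fin N) ℝ := fun k => (Q k)⁻¹ * (E k)ᵀ with hUdef
  funext p q
  obtain ⟨i, a⟩ := p
  obtain ⟨j, b⟩ := q
  rw [Matrix.mul_apply, Fintype.sum_prod_type]
  have hL : ∀ (k : Fin (K + 1)) (c : Fin N),
      blockLower K N Q E (i, a) (k, c)
        = (((if (i : ℕ) = (k : ℕ) then Q (i : ℕ) else 0)
            + (if (i : ℕ) = (k : ℕ) + 1 then E (k : ℕ) else 0))) a c := by
    intro k c
    by_cases h1 : (i : ℕ) = (k : ℕ) <;> by_cases h2 : (i : ℕ) = (k : ℕ) + 1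
    · exact absurd h2 (by omega)
    · simp [blockLower, h1, h2]
    · simp [blockLower, h1, h2]
    · simp [blockLower, h1, h2]
  have hR : ∀ (k : Fin (K + 1)) (c : Fin N),
      blockUpper K N U (k, c) (j, b)
        = (((if (k : ℕ) = (j : ℕ) then (1 : Matrix (Fin N) (Fin N) ℝ) else 0)
            + (if (j : ℕ) = (k : ℕ) + 1 then U (k : ℕ) else 0))) c b := by
    intro k c
    by_cases h1 : (k : ℕ) = (j : ℕ) <;> by_cases h2 : (j : ℕ) = (k : ℕ) + 1
    · exact absurd h2 (by omega)
    · simp [blockUpper, h1, h2]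
    · simp [blockUpper, h1, h2]
    · simp [blockUpper, h1, h2]
  simp_rw [hL, hR, ← Matrix.mul_apply, ← Matrix.sum_apply]
  have hsum : (∑ k : Fin (K + 1),
      ((if (i : ℕ) = (k : ℕ) then Q (i : ℕ) else 0)
        + (if (i : ℕ) = (k : ℕ) + 1 then E (k : ℕ) else 0)) *
      ((if (k : ℕ) = (j : ℕ) then (1 : Matrix (Fin N) (Fin N) ℝ) else 0)
        + (if (j : ℕ) = (k : ℕ) + 1 then U (k : ℕ) else 0)))
      = Q (i : ℕ) * ((if (i : ℕ) = (j : ℕ) then (1 : Matrix (Fin N) (Fin N) ℝ) else 0)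
          + (if (j : ℕ) = (i : ℕ) + 1 then U (i : ℕ) else 0))
        + (if h : 0 < (i : ℕ) then
            E ((i : ℕ) - 1) *
              ((if ((i : ℕ) - 1) = (j : ℕ) then (1 : Matrix (Fin N) (Fin N) ℝ) else 0)
                + (if (j : ℕ) = ((i : ℕ) - 1) + 1 then U ((i : ℕ) - 1) else 0))
          else 0) := by
    simp_rw [add_mul, ite_mul, zero_mul, Finset.sum_add_distrib, sum_ite_coe, sum_ite_shift]
  rw [hsum]
  clear hL hR
  rw [blockTridiag]
  simp only
  have hQ0 : Q 0 = D 0 := rfl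
  have hQsucc : ∀ m, Q (m + 1) = D (m + 1) - E m * U m := fun m => rfl
  have hcancel : (j : ℕ) = (i : ℕ) + 1 → Q (i : ℕ) * U (i : ℕ) = (E (i : ℕ))ᵀ := by
    intro h
    have hdet : IsUnit (Q (i : ℕ)).det :=
      (Matrix.isUnit_iff_isUnit_det _).mp (hQ _ (by have := j.isLt; omega))
    rw [hUdef]
    rw [← Matrix.mul_assoc, Matrix.mul_nonsing_inv _ hdet, Matrix.one_mul]
  split_ifs
  all_goals try (exfalso; omega)
  · -- diagonal, i > 0
    obtain ⟨m, hm⟩ : ∃ m, (i : ℕ) = m + 1 := ⟨(i : ℕ) - 1, by omega⟩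
    rw [hm]
    simp only [Nat.add_sub_cancel, hQsucc, Matrix.add_apply, Matrix.sub_apply,
      Matrix.mul_one, Matrix.sub_mul, zero_add]
    ring_nf
    simp [Matrix.sub_apply]
  · -- diagonal, i = 0
    have h0 : (i : ℕ) = 0 := by omega
    rw [h0]
    simp [hQ0]
  · -- subdiagonal
    have h1 : (i : ℕ) - 1 = (j : ℕ) := by omega
    rw [h1]
    simp
  · -- superdiagonal, i > 0
    have hc := hcancel (by omega)
    simp [hc]
  · -- superdiagonal, i = 0
    have hc := hcancel (by omega)
    simp [hc]
  · simp
  · simp
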